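/- Let ψ be a Bernstein function with ψ(0) = 0, ψ(1) = 1 and ν((0,∞)) > 0, extended holomorphically to the closed right half-plane. Then for z ∈ ℂ with |z| ≤ 1, one has |1 − ψ(1 − z)| = 1 if and only if z = 1. (Claim in the proof of Theorem 5.1 of the paper.) -/

import Mathlib

open MeasureTheory Filter Topology

noncomputable section

/-- Holomorphic extension of the Bernstein function (with `ψ(0) = 0`) to the closed right
half-plane: `ψ(z) = b z + ∫ (1 - e^{-z s}) dν(s)`. -/
def psiC (b : ℝ) (ν : Measure ℝ) (z : ℂ) : ℂ :=
  b * z + ∫ s in Set.Ioi (0 : ℝ), (1 - Complex.exp (-(z * (s : ℂ)))) ∂ν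

/-- Pointwise key inequality: for `‖z‖ ≤ 1`, `z ≠ 1`, `s > 0`,
`‖exp (z s) - 1‖ < e^s - 1`. -/
lemma key_strict {z : ℂ} (hz : ‖z‖ ≤ 1) (hz1 : z ≠ 1) {s : ℝ} (hs : 0 < s) :
    ‖Complex.exp (z * s) - 1‖ < Real.exp s - 1 := by
  have hre : z.re ≤ 1 := le_trans (Complex.re_le_norm z) hz
  have hderiv : ∀ t : ℝ, HasDerivAt (fun t : ℝ => Complex.exp (z * t))
      (Complex.exp (z * t) * z) t := by
    intro t
    have h1 : HasDerivAt (fun t : ℝ => z * (t : ℂ)) z t := by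
      simpa using ((hasDerivAt_id ((t : ℝ) : ℂ)).const_mul z).comp_ofReal
    exact h1.cexp
  have hcont : Continuous fun t : ℝ => Complex.exp (z * t) * z :=
    (Complex.continuous_exp.comp (continuous_const.mul Complex.continuous_ofReal)).mul
      continuous_const
  have heq : (∫ t in (0:ℝ)..s, Complex.exp (z * t) * z) = Complex.exp (z * s) - 1 := by
    rw [intervalIntegral.integral_eq_sub_of_hasDerivAt (fun t _ => hderiv t)
      (hcont.intervalIntegrable 0 s)]
    simp
  have hnorm : ∀ t : ℝ, ‖Complex.exp (z * t) * z‖ = Real.exp (z.re * t) * ‖z‖ := by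
    intro t
    rw [norm_mul, Complex.norm_exp]
    congr 2
    simp [Complex.mul_re]
  have hb1 : ‖Complex.exp (z * s) - 1‖ ≤ ∫ t in (0:ℝ)..s, Real.exp (z.re * t) * ‖z‖ := by
    rw [← heq]
    refine le_trans (intervalIntegral.norm_integral_le_integral_norm hs.le) ?_
    refine le_of_eq (intervalIntegral.integral_congr fun t _ => hnorm t)
  have hltint : (∫ t in (0:ℝ)..s, Real.exp (z.re * t) * ‖z‖) < ∫ t in (0:ℝ)..s, Real.exp t := by
    have hcf : ContinuousOn (fun t : ℝ => Real.exp (z.re * t) * ‖z‖) (Set.Icc 0 s) :=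
      ((Real.continuous_exp.comp (continuous_const.mul continuous_id)).mul
        continuous_const).continuousOn
    have hcg : ContinuousOn Real.exp (Set.Icc 0 s) := Real.continuous_exp.continuousOn
    have hle : ∀ t ∈ Set.Ioc (0:ℝ) s, Real.exp (z.re * t) * ‖z‖ ≤ Real.exp t := by
      intro t ht
      have h1 : Real.exp (z.re * t) ≤ Real.exp t := by
        apply Real.exp_le_exp.2
        nlinarith [ht.1]
      calc Real.exp (z.re * t) * ‖z‖ ≤ Real.exp (z.re * t) * 1 := by
            exact mul_le_mul_of_nonneg_left hz (Real.exp_pos _).le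
        _ = Real.exp (z.re * t) := mul_one _
        _ ≤ Real.exp t := h1
    have hlt : ∃ c ∈ Set.Icc (0:ℝ) s, Real.exp (z.re * c) * ‖z‖ < Real.exp c := by
      rcases lt_or_eq_of_le hz with hzlt | hzeq
      · exact ⟨0, ⟨le_refl 0, hs.le⟩, by simpa using hzlt⟩
      · have hrelt : z.re < 1 := by
          rcases lt_or_eq_of_le hre with h | h
          · exact h
          · exfalso
            apply hz1
            have habs : ‖z‖ = 1 := hzeq
            have h2 : z.re * z.re + z.im * z.im = 1 := by
              have := Complex.sq_norm z
              rw [habs] at this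
              simpa [Complex.normSq_apply] using this.symm
            have him : z.im = 0 := by nlinarith
            exact Complex.ext (by simp [h]) (by simp [him])
        refine ⟨s, ⟨hs.le, le_refl s⟩, ?_⟩
        rw [hzeq, mul_one]
        apply Real.exp_lt_exp.2
        nlinarith
    exact intervalIntegral.integral_lt_integral_of_continuousOn_of_le_of_exists_lt hs
      hcf hcg hle hlt
  calc ‖Complex.exp (z * s) - 1‖ ≤ ∫ t in (0:ℝ)..s, Real.exp (z.re * t) * ‖z‖ := hb1
    _ < ∫ t in (0:ℝ)..s, Real.exp t := hltint
    _ = Real.exp s - 1 := by rw [integral_exp]; simp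

/-- Integrability of `s ↦ 1 - exp (-(w s))` on `(0,∞)` against the Lévy measure. -/
lemma integrable_one_sub_exp {ν : Measure ℝ}
    (hνfin : IntegrableOn (fun s => min 1 s) (Set.Ioi (0 : ℝ)) ν)
    {w : ℂ} (hw : 0 ≤ w.re) :
    IntegrableOn (fun s : ℝ => 1 - Complex.exp (-(w * s))) (Set.Ioi (0 : ℝ)) ν := by
  have hc : Continuous fun s : ℝ => 1 - Complex.exp (-(w * s)) := by
    continuity
  refine (hνfin.const_mul (2 + 2 * ‖w‖)).mono' hc.aestronglyMeasurable ?_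
  rw [ae_restrict_iff' measurableSet_Ioi]
  refine ae_of_all _ fun s hs => ?_
  have hs0 : (0:ℝ) < s := hs
  have hexp : ‖Complex.exp (-(w * s))‖ ≤ 1 := by
    rw [Complex.norm_exp]
    apply Real.exp_le_one_iff.2
    simp only [Complex.neg_re, Complex.mul_re, Complex.ofReal_re, Complex.ofReal_im]
    nlinarith
  have hws : ‖w * (s:ℂ)‖ = ‖w‖ * s := by
    rw [norm_mul, Complex.norm_real, Real.norm_eq_abs, abs_of_pos hs0]
  rcases le_or_gt 1 s with h1s | h1s
  · have : min 1 s = 1 := min_eq_left h1s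
    rw [this, mul_one]
    calc ‖1 - Complex.exp (-(w * s))‖ ≤ ‖(1:ℂ)‖ + ‖Complex.exp (-(w * s))‖ := norm_sub_le _ _
      _ ≤ 1 + 1 := by rw [norm_one]; linarith
      _ ≤ 2 + 2 * ‖w‖ := by nlinarith [norm_nonneg w]
  · have hmin : min 1 s = s := min_eq_right h1s.le
    rw [hmin]
    rcases le_or_gt (‖w‖ * s) 1 with hsmall | hbig
    · have := Complex.norm_exp_sub_one_le (x := -(w * s)) (by
        rw [norm_neg, hws]; exact hsmall)
      rw [norm_neg, hws] at this
      calc ‖1 - Complex.exp (-(w * s))‖ = ‖Complex.exp (-(w * s)) - 1‖ := norm_sub_rev _ _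
        _ ≤ 2 * (‖w‖ * s) := this
        _ ≤ (2 + 2 * ‖w‖) * s := by nlinarith [norm_nonneg w]
    · calc ‖1 - Complex.exp (-(w * s))‖ ≤ ‖(1:ℂ)‖ + ‖Complex.exp (-(w * s))‖ := norm_sub_le _ _
        _ ≤ 2 := by rw [norm_one]; linarith
        _ ≤ 2 * (‖w‖ * s) := by nlinarith
        _ ≤ (2 + 2 * ‖w‖) * s := by nlinarith [norm_nonneg w]

/-- Integrability of `s ↦ 1 - e^{-s}` on `(0,∞)`. -/
lemma integrable_one_sub_exp_real {ν : Measure ℝ}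
    (hνfin : IntegrableOn (fun s => min 1 s) (Set.Ioi (0 : ℝ)) ν) :
    IntegrableOn (fun s : ℝ => 1 - Real.exp (-s)) (Set.Ioi (0 : ℝ)) ν := by
  have hc : Continuous fun s : ℝ => 1 - Real.exp (-s) := by continuity
  refine hνfin.mono' hc.aestronglyMeasurable ?_
  rw [ae_restrict_iff' measurableSet_Ioi]
  refine ae_of_all _ fun s hs => ?_
  have hs0 : (0:ℝ) < s := hs
  have h1 : Real.exp (-s) ≤ 1 := Real.exp_le_one_iff.2 (by linarith)
  have h2 : 1 - s ≤ Real.exp (-s) := by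
    have := Real.add_one_le_exp (-s); linarith
  have h3 : 0 < Real.exp (-s) := Real.exp_pos _
  rw [Real.norm_eq_abs, abs_of_nonneg (by linarith)]
  exact le_min (by linarith) (by linarith)

/-- Claim in the proof of Theorem 5.1: if `ψ` is a Bernstein function with `ψ(0) = 0`,
`ψ(1) = 1` and nonzero Lévy measure, then for `|z| ≤ 1` one has
`|1 - ψ(1 - z)| = 1` if and only if `z = 1`. -/
theorem abs_one_sub_psi_eq_one_iff
    (b : ℝ) (hb : 0 ≤ b) (ν : Measure ℝ)
    (hνfin : IntegrableOn (fun s => min 1 s) (Set.Ioi (0 : ℝ)) ν)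
    (hν0 : ν (Set.Ioi (0 : ℝ)) ≠ 0)
    (hψ1 : b + ∫ s in Set.Ioi (0 : ℝ), (1 - Real.exp (-s)) ∂ν = 1)
    (z : ℂ) (hz : ‖z‖ ≤ 1) :
    ‖1 - psiC b ν (1 - z)‖ = 1 ↔ z = 1 := by
  constructor
  · intro h
    by_contra hz1
    -- the strict bound ‖1 - ψ(1-z)‖ < 1 gives a contradiction
    have hre : z.re ≤ 1 := le_trans (Complex.re_le_norm z) hz
    have hwre : 0 ≤ (1 - z).re := by simp [Complex.sub_re]; linarith
    have hint_w : IntegrableOn (fun s : ℝ => 1 - Complex.exp (-((1 - z) * s)))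
        (Set.Ioi (0 : ℝ)) ν := integrable_one_sub_exp hνfin hwre
    have hint_1 : IntegrableOn (fun s : ℝ => 1 - Complex.exp (-((1:ℂ) * s)))
        (Set.Ioi (0 : ℝ)) ν := integrable_one_sub_exp hνfin (by norm_num)
    have hreal_int : IntegrableOn (fun s : ℝ => 1 - Real.exp (-s)) (Set.Ioi (0 : ℝ)) ν :=
      integrable_one_sub_exp_real hνfin
    -- ψ(1) = 1 in ℂ
    have h1C : (1:ℂ) = (b:ℂ) + ∫ s in Set.Ioi (0 : ℝ), (1 - Complex.exp (-((1:ℂ) * s))) ∂ν := by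
      have hcongr : (∫ s in Set.Ioi (0 : ℝ), (1 - Complex.exp (-((1:ℂ) * s))) ∂ν)
          = ∫ s in Set.Ioi (0 : ℝ), ((1 - Real.exp (-s) : ℝ) : ℂ) ∂ν := by
        refine integral_congr_ae (ae_of_all _ fun s => ?_)
        push_cast
        norm_num
      have hof : (∫ s in Set.Ioi (0 : ℝ), ((1 - Real.exp (-s) : ℝ) : ℂ) ∂ν)
          = (((∫ s in Set.Ioi (0 : ℝ), (1 - Real.exp (-s)) ∂ν : ℝ)) : ℂ) := by
        simpa using ContinuousLinearMap.integral_comp_comm Complex.ofRealCLM hreal_int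
      rw [hcongr, hof]
      exact_mod_cast hψ1.symm
    set D : ℝ → ℂ := fun s => Complex.exp (-((1 - z) * s)) - Complex.exp (-((1:ℂ) * s)) with hD
    have hDint : IntegrableOn D (Set.Ioi (0 : ℝ)) ν := by
      refine (hint_1.sub hint_w).congr (ae_of_all _ fun s => ?_)
      simp only [hD, Pi.sub_apply]
      ring
    have hsub : (∫ s in Set.Ioi (0 : ℝ), D s ∂ν)
        = (∫ s in Set.Ioi (0 : ℝ), (1 - Complex.exp (-((1:ℂ) * s))) ∂ν)
          - ∫ s in Set.Ioi (0 : ℝ), (1 - Complex.exp (-((1 - z) * s))) ∂ν := by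
      rw [← integral_sub hint_1 hint_w]
      refine integral_congr_ae (ae_of_all _ fun s => ?_)
      simp only [hD]
      ring
    have hkey : 1 - psiC b ν (1 - z) = (b:ℂ) * z + ∫ s in Set.Ioi (0 : ℝ), D s ∂ν := by
      rw [psiC, hsub]
      set I1 := ∫ s in Set.Ioi (0 : ℝ), (1 - Complex.exp (-((1:ℂ) * s))) ∂ν
      set Iw := ∫ s in Set.Ioi (0 : ℝ), (1 - Complex.exp (-((1 - z) * s))) ∂ν
      linear_combination h1C
    -- strict integral inequality
    have hDnorm_int : IntegrableOn (fun s => ‖D s‖) (Set.Ioi (0 : ℝ)) ν := hDint.norm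
    have hptwise : ∀ s ∈ Set.Ioi (0:ℝ), ‖D s‖ < 1 - Real.exp (-s) := by
      intro s hs
      have hs0 : (0:ℝ) < s := hs
      have hfact : D s = Complex.exp (-(s:ℂ)) * (Complex.exp (z * s) - 1) := by
        simp only [hD]
        rw [mul_sub, ← Complex.exp_add, mul_one]
        congr 2 <;> ring
      rw [hfact, norm_mul]
      have hnexp : ‖Complex.exp (-(s:ℂ))‖ = Real.exp (-s) := by
        simp [Complex.norm_exp]
      rw [hnexp]
      have hk := key_strict hz hz1 hs0
      have hpos := Real.exp_pos (-s)
      calc Real.exp (-s) * ‖Complex.exp (z * s) - 1‖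
          < Real.exp (-s) * (Real.exp s - 1) := by
            exact mul_lt_mul_of_pos_left hk hpos
        _ = 1 - Real.exp (-s) := by
            rw [mul_sub, ← Real.exp_add, mul_one, neg_add_cancel, Real.exp_zero]
    have hstrict : (∫ s in Set.Ioi (0 : ℝ), ‖D s‖ ∂ν)
        < ∫ s in Set.Ioi (0 : ℝ), (1 - Real.exp (-s)) ∂ν := by
      rw [← sub_pos, ← integral_sub hreal_int hDnorm_int]
      refine (integral_pos_iff_support_of_nonneg_ae ?_ (hreal_int.sub hDnorm_int)).2 ?_
      · rw [EventuallyLE, ae_restrict_iff' measurableSet_Ioi]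
        exact ae_of_all _ fun s hs => sub_nonneg.2 (hptwise s hs).le
      · have hsupp : Set.Ioi (0:ℝ) ⊆ Function.support
            ((fun s => 1 - Real.exp (-s)) - fun s => ‖D s‖) := by
          intro s hs
          simp only [Function.mem_support, Pi.sub_apply]
          exact (sub_pos.2 (hptwise s hs)).ne'
        calc (0:ENNReal) < ν.restrict (Set.Ioi 0) (Set.Ioi 0) := by
              rw [Measure.restrict_apply_self]; exact hν0.bot_lt
          _ ≤ _ := measure_mono hsupp
    have hfinal : ‖1 - psiC b ν (1 - z)‖ < 1 := by
      calc ‖1 - psiC b ν (1 - z)‖ = ‖(b:ℂ) * z + ∫ s in Set.Ioi (0 : ℝ), D s ∂ν‖ := by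
            rw [hkey]
        _ ≤ ‖(b:ℂ) * z‖ + ‖∫ s in Set.Ioi (0 : ℝ), D s ∂ν‖ := norm_add_le _ _
        _ ≤ b * ‖z‖ + ∫ s in Set.Ioi (0 : ℝ), ‖D s‖ ∂ν := by
            refine add_le_add ?_ (norm_integral_le_integral_norm _)
            rw [norm_mul, Complex.norm_real, Real.norm_eq_abs, abs_of_nonneg hb]
        _ < b * 1 + ∫ s in Set.Ioi (0 : ℝ), (1 - Real.exp (-s)) ∂ν := by
            refine add_lt_add_of_le_of_lt ?_ hstrict
            exact mul_le_mul_of_nonneg_left hz hb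
        _ = 1 := by rw [mul_one]; exact hψ1
    rw [h] at hfinal
    exact lt_irrefl 1 hfinal
  · intro h
    subst h
    simp [psiC]
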